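/- Let p be a d×d matrix-valued trigonometric polynomial satisfying p(θ)^H p(θ) + p(θ+π)^H p(θ+π) > 0 for all θ ∈ [0,2π). Then for n = 2k the matrix (pₙᵏ)^H pₙᵏ = 𝒜_k(p̂) with p̂(θ) = ½( p(θ/2)^H p(θ/2) + p(θ/2+π)^H p(θ/2+π) ) is Hermitian positive definite, hence invertible. -/

import Mathlib

open Matrix
open scoped ComplexOrder Kronecker

/-- The (unitary) Fourier matrix `Fₙ` with entries `n^{-1/2} e^{-ι j θ_i^{(n)}}`,
`θ_i^{(n)} = 2πi/n`. -/
noncomputable def Fmat (n : ℕ) : Matrix (Fin n) (Fin n) ℂ :=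
  Matrix.of fun i j =>
    ((Real.sqrt n : ℝ) : ℂ)⁻¹ *
      Complex.exp (-Complex.I * ((j : ℕ) : ℂ) *
        ((2 * Real.pi * (i : ℕ) / n : ℝ) : ℂ))

/-- Block-diagonal matrix of the samples `g(θ_i^{(n)})`, `θ_i^{(n)} = 2πi/n`. -/
noncomputable def sampDiag (n d : ℕ) (g : ℝ → Matrix (Fin d) (Fin d) ℂ) :
    Matrix (Fin n × Fin d) (Fin n × Fin d) ℂ :=
  Matrix.of fun p q =>
    if p.1 = q.1 then g (2 * Real.pi * (p.1 : ℕ) / n) p.2 q.2 else 0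

/-- The block-circulant matrix `𝒜ₙ(g) = (Fₙ ⊗ I_d) diag_i(g(θ_i^{(n)})) (Fₙᴴ ⊗ I_d)`. -/
noncomputable def blockCirc (n d : ℕ) (g : ℝ → Matrix (Fin d) (Fin d) ℂ) :
    Matrix (Fin n × Fin d) (Fin n × Fin d) ℂ :=
  (Fmat n ⊗ₖ (1 : Matrix (Fin d) (Fin d) ℂ)) * sampDiag n d g *
    ((Fmat n)ᴴ ⊗ₖ (1 : Matrix (Fin d) (Fin d) ℂ))

/-- The cutting matrix `Kₙ` (with `n = 2k`) selecting the even-indexed entries. -/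
def cutK (k : ℕ) : Matrix (Fin k) (Fin (2 * k)) ℂ :=
  Matrix.of fun i j => if (j : ℕ) = 2 * (i : ℕ) then 1 else 0

lemma sum_exp_ne (n : ℕ) (hn : 0 < n) (m : ℤ) (hm : ¬ ((n:ℤ) ∣ m)) :
    ∑ i ∈ Finset.range n, Complex.exp (2 * Real.pi * Complex.I * m * i / n) = 0 := by
  have hn' : (n:ℂ) ≠ 0 := Nat.cast_ne_zero.mpr hn.ne'
  have h2 : (2 * (Real.pi:ℂ) * Complex.I) ≠ 0 := by
    simp [Real.pi_ne_zero, Complex.I_ne_zero, Complex.ofReal_ne_zero]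
  have hz : Complex.exp (2 * Real.pi * Complex.I * m / n) ≠ 1 := by
    rw [Ne, Complex.exp_eq_one_iff]
    rintro ⟨t, ht⟩
    apply hm
    refine ⟨t, ?_⟩
    have h4 : (m:ℂ) = (n:ℂ) * t := by
      field_simp at ht
      have h3 : (m:ℂ) * (2 * (Real.pi:ℂ) * Complex.I) = (t * n) * (2 * (Real.pi:ℂ) * Complex.I) := by
        linear_combination (2 * (Real.pi:ℂ) * Complex.I) * ht
      have := mul_right_cancel₀ h2 h3
      rw [this]; ring
    exact_mod_cast h4
  have key : ∀ i ∈ Finset.range n, Complex.exp (2 * Real.pi * Complex.I * m * i / n)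
      = Complex.exp (2 * Real.pi * Complex.I * m / n) ^ i := by
    intro i _
    rw [← Complex.exp_nat_mul]
    ring_nf
  rw [Finset.sum_congr rfl key, geom_sum_eq hz]
  have hpow : Complex.exp (2 * Real.pi * Complex.I * m / n) ^ n = 1 := by
    rw [← Complex.exp_nat_mul,
      show (n:ℂ) * (2 * Real.pi * Complex.I * m / n) = m * (2 * Real.pi * Complex.I) by
        field_simp]
    exact Complex.exp_int_mul_two_pi_mul_I m
  rw [hpow]
  simp

lemma Fmat_conjTranspose_mul_self (n : ℕ) (hn : 0 < n) : (Fmat n)ᴴ * Fmat n = 1 := by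
  have hn' : (n:ℂ) ≠ 0 := Nat.cast_ne_zero.mpr hn.ne'
  have h0 : Real.sqrt n * Real.sqrt n = (n:ℝ) := Real.mul_self_sqrt (by positivity)
  have hs : ((Real.sqrt n : ℝ) : ℂ)⁻¹ * ((Real.sqrt n : ℝ) : ℂ)⁻¹ = (n:ℂ)⁻¹ := by
    rw [← mul_inv, ← Complex.ofReal_mul, h0]
    simp
  ext a b
  rw [Matrix.mul_apply]
  have step : ∀ i : Fin n, (Fmat n)ᴴ a i * Fmat n i b
      = (n:ℂ)⁻¹ * Complex.exp (2 * Real.pi * Complex.I *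
          ((((a:ℕ):ℤ) - ((b:ℕ):ℤ) : ℤ) : ℂ) * i / n) := by
    intro i
    rw [Matrix.conjTranspose_apply]
    simp only [Fmat, Matrix.of_apply, Complex.star_def, _root_.map_mul, map_inv₀,
      ← Complex.exp_conj, map_neg, Complex.conj_I, Complex.conj_ofReal, map_natCast]
    rw [mul_mul_mul_comm, hs, ← Complex.exp_add]
    congr 1
    push_cast
    field_simp
    ring
  rw [Finset.sum_congr rfl (fun i _ => step i), ← Finset.mul_sum]
  rcases eq_or_ne a b with h | h
  · subst h
    simp only [sub_self, Matrix.one_apply_eq, Int.cast_zero]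
    simp [hn', Finset.card_univ]
  · rw [Matrix.one_apply_ne h,
      show (∑ i : Fin n, Complex.exp (2 * Real.pi * Complex.I *
          ((((a:ℕ):ℤ) - ((b:ℕ):ℤ) : ℤ) : ℂ) * i / n))
        = ∑ i ∈ Finset.range n, Complex.exp (2 * Real.pi * Complex.I *
          ((((a:ℕ):ℤ) - ((b:ℕ):ℤ) : ℤ) : ℂ) * i / n) from
        Fin.sum_univ_eq_sum_range (fun j => Complex.exp (2 * Real.pi * Complex.I *
          ((((a:ℕ):ℤ) - ((b:ℕ):ℤ) : ℤ) : ℂ) * j / n)) n,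
      sum_exp_ne n hn _ ?_, mul_zero]
    intro hdvd
    have hne : ((a:ℕ):ℤ) - ((b:ℕ):ℤ) ≠ 0 := by
      have : (a:ℕ) ≠ (b:ℕ) := fun hh => h (Fin.ext hh)
      omega
    have habs : |((a:ℕ):ℤ) - ((b:ℕ):ℤ)| < n := by
      rw [abs_lt]
      have := a.2; have := b.2
      constructor <;> omega
    have h5 := Int.le_of_dvd (abs_pos.mpr hne) ((dvd_abs _ _).mpr hdvd)
    rcases abs_cases (((a:ℕ):ℤ) - ((b:ℕ):ℤ)) with ⟨he, _⟩ | ⟨he, _⟩ <;> omega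

lemma kron_one_conjTranspose {m n d : ℕ} (A : Matrix (Fin m) (Fin n) ℂ) :
    (A ⊗ₖ (1 : Matrix (Fin d) (Fin d) ℂ))ᴴ = Aᴴ ⊗ₖ (1 : Matrix (Fin d) (Fin d) ℂ) := by
  ext p q
  simp only [Matrix.conjTranspose_apply, Matrix.kroneckerMap_apply, star_mul',
    Matrix.one_apply]
  by_cases h : p.2 = q.2
  · simp [h, mul_comm]
  · simp [h, Ne.symm h]

lemma sandwich_apply {m n d : ℕ} (G : Matrix (Fin m) (Fin n) ℂ)
    (g : ℝ → Matrix (Fin d) (Fin d) ℂ) (x y : Fin m × Fin d) :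
    ((G ⊗ₖ (1 : Matrix (Fin d) (Fin d) ℂ)) * sampDiag n d g *
      (Gᴴ ⊗ₖ (1 : Matrix (Fin d) (Fin d) ℂ))) x y
      = ∑ j : Fin n, G x.1 j * g (2 * Real.pi * (j : ℕ) / n) x.2 y.2 * star (G y.1 j) := by
  rw [Matrix.mul_apply]
  simp only [Matrix.mul_apply, Fintype.sum_prod_type, Matrix.kroneckerMap_apply,
    Matrix.one_apply, Matrix.conjTranspose_apply, sampDiag, Matrix.of_apply]
  simp only [mul_ite, ite_mul, mul_zero, zero_mul, mul_one, one_mul,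
    Finset.sum_ite_eq, Finset.sum_ite_eq', Finset.mem_univ, if_true]
  simp [Finset.sum_mul, mul_comm, mul_assoc, mul_left_comm]

lemma cutK_mul_Fmat (k : ℕ) (hk : 0 < k) (i : Fin k) (j : Fin (2 * k)) :
    (cutK k * Fmat (2 * k)) i j = ((Real.sqrt (2 * k : ℕ) : ℝ) : ℂ)⁻¹ *
      Complex.exp (-Complex.I * ((j : ℕ) : ℂ) * ((2 * Real.pi * (i : ℕ) / k : ℝ) : ℂ)) := by
  rw [Matrix.mul_apply]
  have hl : ((⟨2 * (i : ℕ), by have := i.2; omega⟩ : Fin (2 * k)) : ℕ) = 2 * (i : ℕ) := rfl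
  rw [Finset.sum_eq_single (⟨2 * (i : ℕ), by have := i.2; omega⟩ : Fin (2 * k))]
  · have hk' : (k : ℝ) ≠ 0 := Nat.cast_ne_zero.mpr hk.ne'
    have harg : (2 * Real.pi * ((2 * (i : ℕ) : ℕ) : ℝ) / ((2 * k : ℕ) : ℝ))
        = (2 * Real.pi * (i : ℕ) / k : ℝ) := by
      push_cast
      field_simp
    simp only [cutK, Fmat, Matrix.of_apply, hl, harg]
    simp
  · intro l _ hne
    simp only [cutK, Matrix.of_apply]
    rw [if_neg, zero_mul]
    intro hval
    exact hne (Fin.ext (by simpa [hl] using hval))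
  · simp

lemma star_coef_exp (c : ℝ) (j : ℕ) (θ : ℝ) :
    star (((c : ℝ) : ℂ)⁻¹ * Complex.exp (-Complex.I * ((j : ℕ) : ℂ) * ((θ : ℝ) : ℂ)))
      = ((c : ℝ) : ℂ)⁻¹ * Complex.exp (Complex.I * ((j : ℕ) : ℂ) * ((θ : ℝ) : ℂ)) := by
  simp only [Complex.star_def, _root_.map_mul, map_inv₀, ← Complex.exp_conj,
    map_neg, Complex.conj_I, Complex.conj_ofReal, map_natCast]
  ring_nf

lemma coarse {d : ℕ} (k : ℕ) (hk : 0 < k)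
    (q phat : ℝ → Matrix (Fin d) (Fin d) ℂ)
    (hphat : ∀ θ : ℝ, phat θ = (1 / 2 : ℂ) • (q (θ / 2) + q (θ / 2 + Real.pi)))
    (i i' : Fin k) (a b : Fin d) :
    ∑ j : Fin (2 * k), (cutK k * Fmat (2 * k)) i j *
        q (2 * Real.pi * ((j : ℕ) : ℝ) / ((2 * k : ℕ) : ℝ)) a b *
        star ((cutK k * Fmat (2 * k)) i' j)
      = ∑ m : Fin k, Fmat k i m *
          phat (2 * Real.pi * ((m : ℕ) : ℝ) / ((k : ℕ) : ℝ)) a b * star (Fmat k i' m) := by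
  have hkR : (k : ℝ) ≠ 0 := Nat.cast_ne_zero.mpr hk.ne'
  have hkC : (k : ℂ) ≠ 0 := Nat.cast_ne_zero.mpr hk.ne'
  set α : ℝ := 2 * Real.pi * (i : ℕ) / k with hα
  set β : ℝ := 2 * Real.pi * (i' : ℕ) / k with hβ
  have hs2 : ((Real.sqrt (2 * k : ℕ) : ℝ) : ℂ)⁻¹ * ((Real.sqrt (2 * k : ℕ) : ℝ) : ℂ)⁻¹
      = ((2 * k : ℕ) : ℂ)⁻¹ := by
    rw [← mul_inv, ← Complex.ofReal_mul, Real.mul_self_sqrt (by positivity)]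
    simp
  have hs1 : ((Real.sqrt k : ℝ) : ℂ)⁻¹ * ((Real.sqrt k : ℝ) : ℂ)⁻¹ = ((k : ℕ) : ℂ)⁻¹ := by
    rw [← mul_inv, ← Complex.ofReal_mul, Real.mul_self_sqrt (by positivity)]
    simp
  set f : ℕ → ℂ := fun j => ((2 * k : ℕ) : ℂ)⁻¹ *
    (Complex.exp (-Complex.I * (j : ℂ) * (α : ℂ)) *
      (q (2 * Real.pi * (j : ℝ) / ((2 * k : ℕ) : ℝ)) a b *
        Complex.exp (Complex.I * (j : ℂ) * (β : ℂ)))) with hf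
  have hstep : ∀ j : Fin (2 * k), (cutK k * Fmat (2 * k)) i j *
      q (2 * Real.pi * ((j : ℕ) : ℝ) / ((2 * k : ℕ) : ℝ)) a b *
      star ((cutK k * Fmat (2 * k)) i' j) = f (j : ℕ) := by
    intro j
    rw [cutK_mul_Fmat k hk i j, cutK_mul_Fmat k hk i' j, star_coef_exp, hf]
    dsimp only
    rw [← hα, ← hβ, ← hs2]
    ring
  set h : ℕ → ℂ := fun m => ((k : ℕ) : ℂ)⁻¹ *
    (Complex.exp (-Complex.I * (m : ℂ) * (α : ℂ)) *
      (phat (2 * Real.pi * (m : ℝ) / ((k : ℕ) : ℝ)) a b *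
        Complex.exp (Complex.I * (m : ℂ) * (β : ℂ)))) with hh
  have hstep2 : ∀ m : Fin k, Fmat k i m *
      phat (2 * Real.pi * ((m : ℕ) : ℝ) / ((k : ℕ) : ℝ)) a b * star (Fmat k i' m) = h (m : ℕ) := by
    intro m
    show ((Real.sqrt k : ℝ) : ℂ)⁻¹ * Complex.exp (-Complex.I * ((m : ℕ) : ℂ) * ((α : ℝ) : ℂ)) *
        phat _ a b * star (((Real.sqrt k : ℝ) : ℂ)⁻¹ *
          Complex.exp (-Complex.I * ((m : ℕ) : ℂ) * ((β : ℝ) : ℂ))) = _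
    rw [star_coef_exp, hh]
    dsimp only
    rw [← hs1]
    ring
  rw [Finset.sum_congr rfl (fun j _ => hstep j), Finset.sum_congr rfl (fun m _ => hstep2 m),
    Fin.sum_univ_eq_sum_range f (2 * k), Fin.sum_univ_eq_sum_range h k, two_mul,
    Finset.sum_range_add, ← Finset.sum_add_distrib]
  refine Finset.sum_congr rfl fun m hm => ?_
  have e1 : Complex.exp (-Complex.I * ((k + m : ℕ) : ℂ) * (α : ℂ))
      = Complex.exp (-Complex.I * (m : ℂ) * (α : ℂ)) := by
    rw [show -Complex.I * ((k + m : ℕ) : ℂ) * (α : ℂ)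
        = -Complex.I * (m : ℂ) * (α : ℂ) + ((-(i : ℕ) : ℤ) : ℂ) * (2 * (Real.pi : ℂ) * Complex.I) by
      rw [hα]; push_cast; field_simp; ring]
    rw [Complex.exp_add, Complex.exp_int_mul_two_pi_mul_I, mul_one]
  have e2 : Complex.exp (Complex.I * ((k + m : ℕ) : ℂ) * (β : ℂ))
      = Complex.exp (Complex.I * (m : ℂ) * (β : ℂ)) := by
    rw [show Complex.I * ((k + m : ℕ) : ℂ) * (β : ℂ)
        = Complex.I * (m : ℂ) * (β : ℂ) + (((i' : ℕ) : ℤ) : ℂ) * (2 * (Real.pi : ℂ) * Complex.I) by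
      rw [hβ]; push_cast; field_simp; ring]
    rw [Complex.exp_add, Complex.exp_int_mul_two_pi_mul_I, mul_one]
  have r0 : 2 * Real.pi * ((m : ℕ) : ℝ) / ((2 * k : ℕ) : ℝ)
      = (2 * Real.pi * ((m : ℕ) : ℝ) / ((k : ℕ) : ℝ)) / 2 := by
    push_cast
    rw [div_div, mul_comm (k:ℝ) 2]
  have r1 : 2 * Real.pi * ((k + m : ℕ) : ℝ) / ((2 * k : ℕ) : ℝ)
      = (2 * Real.pi * ((m : ℕ) : ℝ) / ((k : ℕ) : ℝ)) / 2 + Real.pi := by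
    push_cast; field_simp; ring
  rw [hf, hh]
  dsimp only
  rw [e1, e2, r0, r1, hphat, Matrix.smul_apply, Matrix.add_apply, smul_eq_mul]
  push_cast
  rw [mul_inv]
  ring

lemma sampDiag_conjTranspose_mul {n d : ℕ} (g : ℝ → Matrix (Fin d) (Fin d) ℂ) :
    (sampDiag n d g)ᴴ * sampDiag n d g = sampDiag n d (fun θ => (g θ)ᴴ * g θ) := by
  ext x y
  rw [Matrix.mul_apply]
  simp only [Matrix.conjTranspose_apply, sampDiag, Matrix.of_apply, Fintype.sum_prod_type,
    apply_ite (star ·), star_zero, ite_mul, zero_mul, mul_ite, mul_zero]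
  simp only [Matrix.mul_apply, Matrix.conjTranspose_apply]
  by_cases h : x.1 = y.1
  · simp [h, Finset.sum_ite_eq', eq_comm]
  · simp [h, Ne.symm h]

lemma sampDiag_posDef {n d : ℕ} (g : ℝ → Matrix (Fin d) (Fin d) ℂ)
    (hg : ∀ θ : ℝ, (g θ).PosDef) : (sampDiag n d g).PosDef := by
  refine Matrix.PosDef.of_dotProduct_mulVec_pos ?_ ?_
  · show (sampDiag n d g)ᴴ = sampDiag n d g
    ext x y
    simp only [Matrix.conjTranspose_apply, sampDiag, Matrix.of_apply]
    by_cases h : x.1 = y.1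
    · rw [if_pos h.symm, if_pos h, ← h, ← Matrix.conjTranspose_apply, (hg _).1]
    · rw [if_neg (fun hh => h hh.symm), if_neg h, star_zero]
  · intro x hx
    have expand : star x ⬝ᵥ (sampDiag n d g) *ᵥ x
        = ∑ i : Fin n, star (fun a => x (i, a)) ⬝ᵥ
            (g (2 * Real.pi * (i : ℕ) / n)) *ᵥ (fun a => x (i, a)) := by
      simp only [dotProduct, Matrix.mulVec, sampDiag, Matrix.of_apply, Fintype.sum_prod_type,
        Pi.star_apply, ite_mul, zero_mul, mul_ite, mul_zero, dotProduct]
      simp [Finset.sum_ite_eq, Finset.mul_sum, mul_assoc]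
    rw [expand]
    obtain ⟨⟨i₀, a₀⟩, hx0⟩ := Function.ne_iff.mp hx
    apply Finset.sum_pos'
    · intro i _
      exact (hg _).posSemidef.dotProduct_mulVec_nonneg _
    · refine ⟨i₀, Finset.mem_univ _, (hg _).dotProduct_mulVec_pos (fun hz => hx0 ?_)⟩
      exact congrFun hz a₀

lemma posDef_conj {m : Type*} [Fintype m] [DecidableEq m] (U M : Matrix m m ℂ)
    (hU : U * Uᴴ = 1) (hM : M.PosDef) : (U * M * Uᴴ).PosDef := by
  refine Matrix.PosDef.of_dotProduct_mulVec_pos ?_ ?_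
  · show (U * M * Uᴴ)ᴴ = U * M * Uᴴ
    simp only [Matrix.conjTranspose_mul, Matrix.conjTranspose_conjTranspose]
    rw [hM.1, Matrix.mul_assoc]
  · intro x hx
    have hy : Uᴴ *ᵥ x ≠ 0 := by
      intro h0
      apply hx
      have h1 : U *ᵥ (Uᴴ *ᵥ x) = x := by
        rw [Matrix.mulVec_mulVec, hU, Matrix.one_mulVec]
      rw [h0, Matrix.mulVec_zero] at h1
      exact h1.symm
    have key : star x ⬝ᵥ (U * M * Uᴴ) *ᵥ x
        = star (Uᴴ *ᵥ x) ⬝ᵥ M *ᵥ (Uᴴ *ᵥ x) := by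
      rw [Matrix.star_mulVec, Matrix.conjTranspose_conjTranspose, Matrix.mul_assoc,
        ← Matrix.mulVec_mulVec, Matrix.dotProduct_mulVec, ← Matrix.mulVec_mulVec]
    rw [key]
    exact hM.dotProduct_mulVec_pos hy

lemma posDef_half_smul {d : ℕ} (M : Matrix (Fin d) (Fin d) ℂ) (hM : M.PosDef) :
    ((1 / 2 : ℂ) • M).PosDef := by
  have h2 : (0 : ℂ) < 1 / 2 := by
    rw [Complex.lt_def]
    norm_num
  refine Matrix.PosDef.of_dotProduct_mulVec_pos ?_ ?_
  · show ((1 / 2 : ℂ) • M)ᴴ = (1 / 2 : ℂ) • M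
    rw [Matrix.conjTranspose_smul, hM.1]
    norm_num
  · intro x hx
    have h1 := hM.dotProduct_mulVec_pos hx
    rw [Matrix.smul_mulVec, dotProduct_smul, smul_eq_mul]
    exact mul_pos h2 h1

lemma cutK_transpose_conjTranspose (k : ℕ) : ((cutK k)ᵀ)ᴴ = cutK k := by
  ext i j
  simp [cutK, Matrix.conjTranspose_apply, Matrix.transpose_apply, apply_ite (star ·)]

lemma cutK_conjTranspose (k : ℕ) : (cutK k)ᴴ = (cutK k)ᵀ := by
  ext i j
  simp [cutK, Matrix.conjTranspose_apply, Matrix.transpose_apply, apply_ite (star ·)]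

/-- if `p(θ)ᴴp(θ) + p(θ+π)ᴴp(θ+π) > 0` for all `θ`, then for
`n = 2k` the matrix `(pₙᵏ)ᴴ pₙᵏ = 𝒜_k(p̂)` with
`p̂(θ) = ½(p(θ/2)ᴴp(θ/2) + p(θ/2+π)ᴴp(θ/2+π))` is Hermitian positive definite,
hence invertible. -/
theorem stmt_13 {d k : ℕ} (hk : 0 < k)
    (p : ℝ → Matrix (Fin d) (Fin d) ℂ)
    (hpos : ∀ θ : ℝ,
      ((p θ)ᴴ * p θ + (p (θ + Real.pi))ᴴ * p (θ + Real.pi)).PosDef)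
    (phat : ℝ → Matrix (Fin d) (Fin d) ℂ)
    (hphat : ∀ θ : ℝ, phat θ = (1 / 2 : ℂ) •
      ((p (θ / 2))ᴴ * p (θ / 2) +
        (p (θ / 2 + Real.pi))ᴴ * p (θ / 2 + Real.pi)))
    (P : Matrix (Fin (2 * k) × Fin d) (Fin k × Fin d) ℂ)
    (hP : P = blockCirc (2 * k) d p *
      ((cutK k)ᵀ ⊗ₖ (1 : Matrix (Fin d) (Fin d) ℂ))) :
    Pᴴ * P = blockCirc k d phat ∧ (Pᴴ * P).PosDef ∧ IsUnit (Pᴴ * P) := by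
  have hn : 0 < 2 * k := by omega
  set q : ℝ → Matrix (Fin d) (Fin d) ℂ := fun θ => (p θ)ᴴ * p θ with hq
  have hFF : ((Fmat (2 * k))ᴴ ⊗ₖ (1 : Matrix (Fin d) (Fin d) ℂ)) *
      (Fmat (2 * k) ⊗ₖ (1 : Matrix (Fin d) (Fin d) ℂ)) = 1 := by
    rw [← Matrix.mul_kronecker_mul, Fmat_conjTranspose_mul_self _ hn, Matrix.one_mul,
      Matrix.one_kronecker_one]
  have hstart : ((cutK k) ⊗ₖ (1 : Matrix (Fin d) (Fin d) ℂ)) * ((Fmat (2 * k)) ⊗ₖ (1 : Matrix (Fin d) (Fin d) ℂ))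
      = (cutK k * Fmat (2 * k)) ⊗ₖ (1 : Matrix (Fin d) (Fin d) ℂ) := by
    rw [← Matrix.mul_kronecker_mul, Matrix.mul_one]
  have hend : ((Fmat (2 * k))ᴴ ⊗ₖ (1 : Matrix (Fin d) (Fin d) ℂ)) * ((cutK k)ᵀ ⊗ₖ (1 : Matrix (Fin d) (Fin d) ℂ))
      = ((cutK k * Fmat (2 * k))ᴴ) ⊗ₖ (1 : Matrix (Fin d) (Fin d) ℂ) := by
    rw [← Matrix.mul_kronecker_mul, Matrix.mul_one, Matrix.conjTranspose_mul,
      cutK_conjTranspose]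
  have hPP : Pᴴ * P = ((cutK k * Fmat (2 * k)) ⊗ₖ (1 : Matrix (Fin d) (Fin d) ℂ)) *
      sampDiag (2 * k) d q * (((cutK k * Fmat (2 * k))ᴴ) ⊗ₖ (1 : Matrix (Fin d) (Fin d) ℂ)) := by
    subst hP
    simp only [blockCirc]
    simp only [Matrix.conjTranspose_mul, kron_one_conjTranspose,
      Matrix.conjTranspose_conjTranspose, cutK_transpose_conjTranspose]
    simp only [Matrix.mul_assoc]
    rw [← Matrix.mul_assoc ((Fmat (2 * k))ᴴ ⊗ₖ (1 : Matrix (Fin d) (Fin d) ℂ))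
      (Fmat (2 * k) ⊗ₖ 1), hFF, Matrix.one_mul]
    rw [← Matrix.mul_assoc ((sampDiag (2 * k) d p)ᴴ) (sampDiag (2 * k) d p),
      sampDiag_conjTranspose_mul]
    rw [hend]
    rw [← Matrix.mul_assoc, ← Matrix.mul_assoc, hstart, Matrix.mul_assoc, ← hq]
    rw [Matrix.conjTranspose_mul]
  have hmain : Pᴴ * P = blockCirc k d phat := by
    rw [hPP, blockCirc]
    ext x y
    rw [sandwich_apply, sandwich_apply]
    exact coarse k hk q phat (fun θ => hphat θ) x.1 y.1 x.2 y.2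
  refine ⟨hmain, ?_, ?_⟩
  · rw [hmain, blockCirc, ← kron_one_conjTranspose]
    apply posDef_conj
    · rw [kron_one_conjTranspose, ← Matrix.mul_kronecker_mul, Matrix.mul_one,
        mul_eq_one_comm.mp (Fmat_conjTranspose_mul_self k hk),
        Matrix.one_kronecker_one]
    · apply sampDiag_posDef
      intro θ
      rw [hphat θ]
      exact posDef_half_smul _ (hpos (θ / 2))
  · rw [hmain, blockCirc, ← kron_one_conjTranspose]
    refine (posDef_conj _ _ ?_ ?_).isUnit
    · rw [kron_one_conjTranspose, ← Matrix.mul_kronecker_mul, Matrix.mul_one,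
        mul_eq_one_comm.mp (Fmat_conjTranspose_mul_self k hk),
        Matrix.one_kronecker_one]
    · apply sampDiag_posDef
      intro θ
      rw [hphat θ]
      exact posDef_half_smul _ (hpos (θ / 2))
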